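/- For every even k = 2d ≥ 2, the group ℤ_3 wr ℤ^k does not have property R_∞: there exists an automorphism φ of ℤ_3 wr ℤ^{2d} with R(φ) < ∞ (one may take φ̄ to be the d-fold direct sum of the matrix ((0,1),(−1,−1)) ∈ GL(2,ℤ), which has order 3, together with multiplication by m = 2 on each summand ℤ/3ℤ; this φ has R(φ) = 3^d). -/

import Mathlib

/-- Twisted conjugacy relation for an automorphism `φ` of `G`:
`x ∼ y` iff `y = h * x * φ(h)⁻¹` for some `h`. -/
def twistedConj {G : Type*} [Group G] (φ : G ≃* G) (x y : G) : Prop :=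
  ∃ h : G, y = h * x * (φ h)⁻¹

/-- The set of Reidemeister (twisted conjugacy) classes of `φ`.
Its cardinality is the Reidemeister number `R(φ)`. -/
def ReidemeisterClasses {G : Type*} [Group G] (φ : G ≃* G) := Quot (twistedConj φ)

/-- `Lamp q k` is `Σ = ⨁_{x ∈ ℤ^k} ℤ/qℤ`: finitely supported functions `ℤ^k → ℤ/qℤ`. -/
abbrev Lamp (q k : ℕ) := (Fin k → ℤ) →₀ ZMod q

/-- The shift action of `ℤ^k` on `Σ`: `α(y)(δ_x) = δ_{x+y}`. -/
noncomputable def lampShift (q k : ℕ) :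
    Multiplicative (Fin k → ℤ) →* MulAut (Multiplicative (Lamp q k)) where
  toFun y := AddEquiv.toMultiplicative (Finsupp.domCongr (Equiv.addRight (Multiplicative.toAdd y)))
  map_one' := by
    refine MulEquiv.ext fun f => ?_
    refine Multiplicative.toAdd.injective ?_
    ext x
    simp
    rfl
  map_mul' y z := by
    refine MulEquiv.ext fun f => ?_
    refine Multiplicative.toAdd.injective ?_
    ext x
    simp [Equiv.Perm.mul_def, add_comm, add_assoc, add_left_comm]

/-- The restricted wreath product `ℤ_q wr ℤ^k = Σ ⋊ ℤ^k`. -/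
abbrev Wreath (q k : ℕ) :=
  SemidirectProduct (Multiplicative (Lamp q k)) (Multiplicative (Fin k → ℤ)) (lampShift q k)

/-- `δ_x ∈ Σ`: the function equal to `1` at `x` and `0` elsewhere (written multiplicatively). -/
noncomputable def lampDelta (q k : ℕ) (x : Fin k → ℤ) : Multiplicative (Lamp q k) :=
  Multiplicative.ofAdd (Finsupp.single x 1)

variable {d : ℕ}

/-- The block matrix `A = diag(((0,1),(-1,-1)))` acting on `ℤ^{2d}`. -/
def Amap (d : ℕ) (v : Fin (2*d) → ℤ) (i : Fin (2*d)) : ℤ :=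
  if h : i.val % 2 = 0 then v ⟨i.val + 1, by omega⟩
  else -v ⟨i.val - 1, by omega⟩ - v i

lemma Amap_even (v : Fin (2*d) → ℤ) (m : ℕ) (h : 2*m+1 < 2*d) :
    Amap d v ⟨2*m, by omega⟩ = v ⟨2*m+1, h⟩ :=
  dif_pos (Nat.mul_mod_right 2 m)

lemma Amap_odd (v : Fin (2*d) → ℤ) (m : ℕ) (h : 2*m+1 < 2*d) :
    Amap d v ⟨2*m+1, h⟩ = -v ⟨2*m, by omega⟩ - v ⟨2*m+1, h⟩ :=
  dif_neg (show ¬ (2*m+1) % 2 = 0 by omega)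

lemma fin_two_cases (i : Fin (2*d)) :
    (∃ m, ∃ h : 2*m+1 < 2*d, i = ⟨2*m, by omega⟩) ∨
    (∃ m, ∃ h : 2*m+1 < 2*d, i = ⟨2*m+1, h⟩) := by
  rcases Nat.even_or_odd i.val with ⟨m, hm⟩ | ⟨m, hm⟩
  · exact Or.inl ⟨m, by omega, by ext; simp; omega⟩
  · exact Or.inr ⟨m, by omega, by ext; simp; omega⟩

lemma Amap_add (v w : Fin (2*d) → ℤ) : Amap d (v + w) = Amap d v + Amap d w := by
  funext i
  simp only [Amap, Pi.add_apply]
  split_ifs <;> ring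

lemma Amap_cube (v : Fin (2*d) → ℤ) : Amap d (Amap d (Amap d v)) = v := by
  funext i
  rcases fin_two_cases i with ⟨m, h, rfl⟩ | ⟨m, h, rfl⟩ <;>
    simp only [Amap_even _ m h, Amap_odd _ m h] <;> ring

lemma Amap_sq_add (v : Fin (2*d) → ℤ) : Amap d (Amap d v) + Amap d v + v = 0 := by
  funext i
  rcases fin_two_cases i with ⟨m, h, rfl⟩ | ⟨m, h, rfl⟩ <;>
    simp only [Pi.add_apply, Pi.zero_apply, Amap_even _ m h, Amap_odd _ m h] <;> ring

/-- `A` as an equivalence of `ℤ^{2d}` (with inverse `A²`). -/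
def Ae (d : ℕ) : (Fin (2*d) → ℤ) ≃ (Fin (2*d) → ℤ) where
  toFun := Amap d
  invFun v := Amap d (Amap d v)
  left_inv v := Amap_cube v
  right_inv v := Amap_cube v

lemma Ae_symm_apply (v : Fin (2*d) → ℤ) : (Ae d).symm v = Amap d (Amap d v) := rfl

lemma Amap_sub (v w : Fin (2*d) → ℤ) : Amap d (v - w) = Amap d v - Amap d w := by
  funext i
  simp only [Amap, Pi.sub_apply]
  split_ifs <;> ring



lemma lampShift_apply (q k : ℕ) (y : Multiplicative (Fin k → ℤ))
    (f : Multiplicative (Lamp q k)) (x : Fin k → ℤ) :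
    Multiplicative.toAdd ((lampShift q k) y f) x
      = (Multiplicative.toAdd f) (x - Multiplicative.toAdd y) := rfl

/-- the base automorphism, multiplicatively -/
def Psi (d : ℕ) : Multiplicative (Fin (2*d) → ℤ) ≃* Multiplicative (Fin (2*d) → ℤ) :=
  AddEquiv.toMultiplicative { Ae d with map_add' := Amap_add }

/-- the lamp automorphism `σ f = -(f ∘ A⁻¹)`, multiplicatively -/
noncomputable def sigmaM (d : ℕ) : Multiplicative (Lamp 3 (2*d)) ≃* Multiplicative (Lamp 3 (2*d)) :=
  AddEquiv.toMultiplicative ((Finsupp.domCongr (Ae d)).trans (AddEquiv.neg _))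

lemma toAdd_Psi (y : Multiplicative (Fin (2*d) → ℤ)) :
    Multiplicative.toAdd (Psi d y) = Amap d (Multiplicative.toAdd y) := rfl

lemma toAdd_sigmaM (f : Multiplicative (Lamp 3 (2*d))) (x : Fin (2*d) → ℤ) :
    Multiplicative.toAdd (sigmaM d f) x
      = -(Multiplicative.toAdd f) ((Ae d).symm x) := rfl

lemma Ae_symm_sub_Amap (x y' : Fin (2*d) → ℤ) :
    (Ae d).symm (x - Amap d y') = (Ae d).symm x - y' := by
  rw [Ae_symm_apply, Ae_symm_apply, Amap_sub, Amap_sub, Amap_cube]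

lemma compat (y : Multiplicative (Fin (2*d) → ℤ)) (f : Multiplicative (Lamp 3 (2*d))) :
    sigmaM d ((lampShift 3 (2*d)) y f) = (lampShift 3 (2*d)) (Psi d y) (sigmaM d f) := by
  refine Multiplicative.toAdd.injective ?_
  ext x
  rw [toAdd_sigmaM, lampShift_apply, lampShift_apply, toAdd_sigmaM, toAdd_Psi,
    Ae_symm_sub_Amap]

/-- The automorphism `φ` of the wreath product. -/
noncomputable def phi (d : ℕ) : Wreath 3 (2*d) ≃* Wreath 3 (2*d) where
  toFun x := ⟨sigmaM d x.left, Psi d x.right⟩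
  invFun x := ⟨(sigmaM d).symm x.left, (Psi d).symm x.right⟩
  left_inv x := by simp
  right_inv x := by simp
  map_mul' a b := by
    ext
    · simp only [SemidirectProduct.mul_left, map_mul]
      rw [compat]
    · simp only [SemidirectProduct.mul_right, map_mul]

/-- The invariant: class of the base component in `coker(I - A) ≅ (ℤ/3)^d`. -/
def invc (d : ℕ) (w : Wreath 3 (2*d)) (j : Fin d) : ZMod 3 :=
  ((Multiplicative.toAdd w.right ⟨2*j.val, by omega⟩
    - Multiplicative.toAdd w.right ⟨2*j.val+1, by omega⟩ : ℤ) : ZMod 3)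

lemma right_of_tc (x h : Wreath 3 (2*d)) :
    Multiplicative.toAdd (h * x * ((phi d) h)⁻¹).right
      = Multiplicative.toAdd h.right + Multiplicative.toAdd x.right
        - Amap d (Multiplicative.toAdd h.right) := rfl

lemma invc_invariant (x h : Wreath 3 (2*d)) :
    invc d (h * x * ((phi d) h)⁻¹) = invc d x := by
  funext j
  have hj : 2*j.val+1 < 2*d := by omega
  set z := Multiplicative.toAdd h.right with hz
  set y := Multiplicative.toAdd x.right with hy
  simp only [invc, right_of_tc, Pi.add_apply, Pi.sub_apply]
  rw [← hz, ← hy]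
  rw [Amap_even z j.val hj, Amap_odd z j.val hj]
  have : (z ⟨2*j.val, by omega⟩ + y ⟨2*j.val, by omega⟩ - z ⟨2*j.val+1, hj⟩
      - (z ⟨2*j.val+1, hj⟩ + y ⟨2*j.val+1, hj⟩
        - (-z ⟨2*j.val, by omega⟩ - z ⟨2*j.val+1, hj⟩)))
      = (y ⟨2*j.val, by omega⟩ - y ⟨2*j.val+1, hj⟩) - 3 * z ⟨2*j.val+1, hj⟩ := by
    ring
  rw [this]
  push_cast
  rw [show (3:ZMod 3) = 0 from by decide]
  ring

/-- Solution `z` of `y' - y = (I - A) z`, given congruence of invariants. -/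
def zfun (d : ℕ) (y y' : Fin (2*d) → ℤ) (i : Fin (2*d)) : ℤ :=
  if h : i.val % 2 = 0 then
    (y' i - y i) + ((y' ⟨i.val+1, by omega⟩ - y ⟨i.val+1, by omega⟩) - (y' i - y i)) / 3
  else ((y' i - y i) - (y' ⟨i.val-1, by omega⟩ - y ⟨i.val-1, by omega⟩)) / 3

lemma zfun_even (y y' : Fin (2*d) → ℤ) (m : ℕ) (h : 2*m+1 < 2*d) :
    zfun d y y' ⟨2*m, by omega⟩
      = (y' ⟨2*m, by omega⟩ - y ⟨2*m, by omega⟩)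
        + ((y' ⟨2*m+1, h⟩ - y ⟨2*m+1, h⟩) - (y' ⟨2*m, by omega⟩ - y ⟨2*m, by omega⟩)) / 3 :=
  dif_pos (Nat.mul_mod_right 2 m)

lemma zfun_odd (y y' : Fin (2*d) → ℤ) (m : ℕ) (h : 2*m+1 < 2*d) :
    zfun d y y' ⟨2*m+1, h⟩
      = ((y' ⟨2*m+1, h⟩ - y ⟨2*m+1, h⟩) - (y' ⟨2*m, by omega⟩ - y ⟨2*m, by omega⟩)) / 3 :=
  dif_neg (show ¬ (2*m+1) % 2 = 0 by omega)

lemma exists_z (y y' : Fin (2*d) → ℤ)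
    (hc : ∀ j : Fin d, ((y ⟨2*j.val, by omega⟩ - y ⟨2*j.val+1, by omega⟩ : ℤ) : ZMod 3)
      = ((y' ⟨2*j.val, by omega⟩ - y' ⟨2*j.val+1, by omega⟩ : ℤ) : ZMod 3)) :
    y' = zfun d y y' + y - Amap d (zfun d y y') := by
  have hdvd : ∀ m (h : 2*m+1 < 2*d),
      (3:ℤ) ∣ ((y' ⟨2*m+1, h⟩ - y ⟨2*m+1, h⟩) - (y' ⟨2*m, by omega⟩ - y ⟨2*m, by omega⟩)) := by
    intro m h
    have hthis := hc ⟨m, by omega⟩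
    rw [← sub_eq_zero] at hthis
    have h0 : (((y' ⟨2*m+1, h⟩ - y ⟨2*m+1, h⟩) - (y' ⟨2*m, by omega⟩ - y ⟨2*m, by omega⟩) : ℤ) : ZMod 3) = 0 := by
      push_cast at hthis ⊢
      linear_combination hthis
    exact_mod_cast (ZMod.intCast_zmod_eq_zero_iff_dvd _ 3).mp h0
  funext i
  rcases fin_two_cases i with ⟨m, h, rfl⟩ | ⟨m, h, rfl⟩
  · have hd3 := hdvd m h
    simp only [Pi.add_apply, Pi.sub_apply]
    rw [Amap_even _ m h, zfun_even _ _ m h, zfun_odd _ _ m h]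
    omega
  · have hd3 := hdvd m h
    simp only [Pi.add_apply, Pi.sub_apply]
    rw [Amap_odd _ m h, zfun_even _ _ m h, zfun_odd _ _ m h]
    omega

/-- The permutation `x ↦ A x + y'` of `ℤ^{2d}`. -/
def Eperm (d : ℕ) (y' : Fin (2*d) → ℤ) : (Fin (2*d) → ℤ) ≃ (Fin (2*d) → ℤ) :=
  (Ae d).trans (Equiv.addRight y')

lemma Eperm_apply (y' u : Fin (2*d) → ℤ) : Eperm d y' u = Amap d u + y' := rfl

lemma Eperm_symm_apply (y' u : Fin (2*d) → ℤ) :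
    (Eperm d y').symm u = (Ae d).symm (u - y') := rfl

lemma Eperm_cube (y' u : Fin (2*d) → ℤ) :
    Eperm d y' (Eperm d y' (Eperm d y' u)) = u := by
  simp only [Eperm_apply, Amap_add, Amap_cube]
  funext i
  have h2 := congrFun (Amap_sq_add (v := y')) i
  simp only [Pi.add_apply, Pi.zero_apply] at h2 ⊢
  linarith

lemma Eperm_symm_eq (y' u : Fin (2*d) → ℤ) :
    (Eperm d y').symm u = Eperm d y' (Eperm d y' u) := by
  apply (Eperm d y').injective
  rw [Equiv.apply_symm_apply, Eperm_cube]

lemma Eperm_symm_cube (y' u : Fin (2*d) → ℤ) :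
    (Eperm d y').symm ((Eperm d y').symm ((Eperm d y').symm u)) = u := by
  simp only [Eperm_symm_eq, Eperm_cube]

/-- `S t = t ∘ (Eperm)⁻¹` on lamps. -/
noncomputable def Sop (d : ℕ) (y' : Fin (2*d) → ℤ) : Lamp 3 (2*d) → Lamp 3 (2*d) :=
  Finsupp.equivMapDomain (Eperm d y')

lemma Sop_apply (y' : Fin (2*d) → ℤ) (t : Lamp 3 (2*d)) (u : Fin (2*d) → ℤ) :
    Sop d y' t u = t ((Eperm d y').symm u) := rfl

lemma zmod3_triple (v : ZMod 3) : v + v + v = 0 := by revert v; decide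

lemma Sop_solve (y' : Fin (2*d) → ℤ) (t : Lamp 3 (2*d)) :
    (t + t + Sop d y' t + Sop d y' (Sop d y' t) + Sop d y' (Sop d y' t))
      + Sop d y' (t + t + Sop d y' t + Sop d y' (Sop d y' t) + Sop d y' (Sop d y' t)) = t := by
  ext u
  simp only [Finsupp.add_apply, Sop_apply, Eperm_symm_cube]
  linear_combination zmod3_triple (t u) + zmod3_triple (t ((Eperm d y').symm u))
    + zmod3_triple (t ((Eperm d y').symm ((Eperm d y').symm u)))

lemma left_of_tc (x h : Wreath 3 (2*d)) (u : Fin (2*d) → ℤ) :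
    Multiplicative.toAdd (h * x * ((phi d) h)⁻¹).left u
      = Multiplicative.toAdd h.left u
        + Multiplicative.toAdd x.left (u - Multiplicative.toAdd h.right)
        + -(Multiplicative.toAdd (sigmaM d h.left)
            ((u - (Multiplicative.toAdd h.right + Multiplicative.toAdd x.right))
              - -(Amap d (Multiplicative.toAdd h.right)))) := rfl

lemma invc_complete (x x' : Wreath 3 (2*d)) (hc : invc d x = invc d x') :
    twistedConj (phi d) x x' := by
  have hz : Multiplicative.toAdd x'.right
      = zfun d (Multiplicative.toAdd x.right) (Multiplicative.toAdd x'.right)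
        + Multiplicative.toAdd x.right
        - Amap d (zfun d (Multiplicative.toAdd x.right) (Multiplicative.toAdd x'.right)) :=
    exists_z _ _ (fun j => congrFun hc j)
  set y := Multiplicative.toAdd x.right with hy
  set y' := Multiplicative.toAdd x'.right with hy'
  set z := zfun d y y' with hzdef
  set t : Lamp 3 (2*d) := Multiplicative.toAdd x'.left
      - Finsupp.equivMapDomain (Equiv.addRight z) (Multiplicative.toAdd x.left) with ht
  set g := t + t + Sop d y' t + Sop d y' (Sop d y' t) + Sop d y' (Sop d y' t) with hg
  refine ⟨⟨Multiplicative.ofAdd g, Multiplicative.ofAdd z⟩, ?_⟩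
  ext1
  · -- left component
    refine Multiplicative.toAdd.injective ?_
    ext u
    rw [left_of_tc]
    simp only [toAdd_ofAdd]
    have harg : (u - (z + y)) - -(Amap d z) = u - y' := by
      rw [hz]; abel
    rw [harg]
    have hsig : Multiplicative.toAdd (sigmaM d (⟨Multiplicative.ofAdd g, Multiplicative.ofAdd z⟩ :
        Wreath 3 (2*d)).left) (u - y') = -(g ((Ae d).symm (u - y'))) := rfl
    rw [hsig, neg_neg]
    have hS : g ((Ae d).symm (u - y')) = Sop d y' g u := rfl
    rw [hS]
    have hsolve := DFunLike.congr_fun (Sop_solve y' t) u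
    rw [Finsupp.add_apply] at hsolve
    have htu : t u = Multiplicative.toAdd x'.left u
        - Multiplicative.toAdd x.left (u - z) := by
      rw [ht, Finsupp.sub_apply, Finsupp.equivMapDomain_apply]
      rfl
    rw [← hg] at hsolve
    rw [htu] at hsolve
    linear_combination -hsolve
  · -- right component
    refine Multiplicative.toAdd.injective ?_
    rw [right_of_tc]
    exact hz

lemma invc_surjective : Function.Surjective (invc d) := by
  intro v
  refine ⟨⟨1, Multiplicative.ofAdd (fun i : Fin (2*d) =>
    if h : i.val % 2 = 0 then ((v ⟨i.val / 2, by omega⟩).val : ℤ) else 0)⟩, ?_⟩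
  funext j
  simp only [invc, toAdd_ofAdd]
  rw [dif_pos (Nat.mul_mod_right 2 j.val), dif_neg (show ¬ (2*j.val+1) % 2 = 0 by omega)]
  have hj : (⟨2*j.val/2, by omega⟩ : Fin d) = j := by ext; simp
  rw [hj, sub_zero]
  push_cast
  simp [ZMod.natCast_val, ZMod.cast_id]

noncomputable def cbar (d : ℕ) : ReidemeisterClasses (phi d) → (Fin d → ZMod 3) :=
  Quot.lift (invc d) (fun a b hab => by
    obtain ⟨h, rfl⟩ := hab
    exact (invc_invariant a h).symm)

lemma cbar_bijective : Function.Bijective (cbar d) := by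
  constructor
  · intro p q
    induction p using Quot.ind with | _ a =>
    induction q using Quot.ind with | _ b =>
    intro hab
    exact Quot.sound (invc_complete a b hab)
  · intro v
    obtain ⟨w, hw⟩ := invc_surjective v
    exact ⟨Quot.mk _ w, hw⟩


/-- For even `k = 2d ≥ 2`, `ℤ_3 wr ℤ^{2d}` does not have property `R_∞`: there is an
automorphism `φ` with `R(φ) = 3^d < ∞`. -/
theorem stmt18 (d : ℕ) (hd : 1 ≤ d) :
    (∃ φ : Wreath 3 (2 * d) ≃* Wreath 3 (2 * d),
      Finite (ReidemeisterClasses φ) ∧ Nat.card (ReidemeisterClasses φ) = 3 ^ d) ∧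
    ¬ (∀ φ : Wreath 3 (2 * d) ≃* Wreath 3 (2 * d), Infinite (ReidemeisterClasses φ)) := by
  have hfin : Finite (ReidemeisterClasses (phi d)) :=
    Finite.of_injective _ (cbar_bijective (d := d)).injective
  have hcard : Nat.card (ReidemeisterClasses (phi d)) = 3 ^ d := by
    rw [Nat.card_eq_of_bijective _ (cbar_bijective (d := d))]
    simp [Nat.card_eq_fintype_card]
  refine ⟨⟨phi d, hfin, hcard⟩, ?_⟩
  intro hall
  exact (not_finite_iff_infinite.mpr (hall (phi d))) hfin
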